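/- Let Ψ = XᵀX/n with Ψ_{jj} = 1 and max_{j'≠j}|Ψ_{jj'}| ≤ 1/(7αs) for some integer s ≥ 1 and α > 1 (mutual incoherence). Then for every subset S ⊆ {1,…,p} with |S| ≤ s and every nonzero Δ ∈ ℝ^{p×q} with ‖Δ_{Sᶜ}‖_{2,1} ≤ 3‖Δ_S‖_{2,1}, one has (1/n)‖XΔ‖_F² ≥ (1 − 1/α)‖Δ_S‖_F². -/

import Mathlib

open scoped BigOperators
open Matrix Classical

/-- Euclidean norm of a row. -/
noncomputable def rowNorm {q : ℕ} (v : Fin q → ℝ) : ℝ := Real.sqrt (∑ j, (v j) ^ 2)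

/-- `ℓ_{2,1}` norm: sum of row Euclidean norms. -/
noncomputable def norm21 {p q : ℕ} (B : Matrix (Fin p) (Fin q) ℝ) : ℝ :=
  ∑ j, rowNorm (B j)

/-- `ℓ_{2,∞}` norm: maximum of row Euclidean norms. -/
noncomputable def norm2inf {p q : ℕ} (B : Matrix (Fin p) (Fin q) ℝ) : ℝ :=
  ⨆ j, rowNorm (B j)

/-- Frobenius norm of a real matrix. -/
noncomputable def frob {n q : ℕ} (Z : Matrix (Fin n) (Fin q) ℝ) : ℝ :=
  Real.sqrt (∑ i, ∑ j, (Z i j) ^ 2)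

/-- Restriction of a matrix to a set of rows (zero outside `S`). -/
noncomputable def restrict {p q : ℕ} (B : Matrix (Fin p) (Fin q) ℝ) (S : Set (Fin p)) :
    Matrix (Fin p) (Fin q) ℝ :=
  fun j k => if j ∈ S then B j k else 0

/-- Mutual incoherence of the Gram matrix `Ψ = XᵀX/n`. -/
def MutualIncoherence {p : ℕ} (Ψ : Matrix (Fin p) (Fin p) ℝ) (α : ℝ) (s : ℕ) : Prop :=
  (∀ j, Ψ j j = 1) ∧ ∀ j j' : Fin p, j ≠ j' → |Ψ j j'| ≤ 1 / (7 * α * s)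

lemma rowNorm_nonneg' {q : ℕ} (v : Fin q → ℝ) : 0 ≤ rowNorm v := Real.sqrt_nonneg _

lemma rowNorm_sq' {q : ℕ} (v : Fin q → ℝ) : rowNorm v ^ 2 = ∑ j, (v j) ^ 2 :=
  Real.sq_sqrt (Finset.sum_nonneg fun _ _ => sq_nonneg _)

lemma abs_dot_le' {q : ℕ} (v w : Fin q → ℝ) :
    |∑ k, v k * w k| ≤ rowNorm v * rowNorm w := by
  have h2 : (∑ k, v k * w k) ^ 2 ≤ (rowNorm v * rowNorm w) ^ 2 := by
    rw [mul_pow, rowNorm_sq', rowNorm_sq']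
    exact Finset.sum_mul_sq_le_sq_mul_sq _ _ _
  calc |∑ k, v k * w k| = Real.sqrt ((∑ k, v k * w k) ^ 2) := (Real.sqrt_sq_eq_abs _).symm
    _ ≤ Real.sqrt ((rowNorm v * rowNorm w) ^ 2) := Real.sqrt_le_sqrt h2
    _ = rowNorm v * rowNorm w :=
        Real.sqrt_sq (mul_nonneg (rowNorm_nonneg' v) (rowNorm_nonneg' w))

lemma expand_quad {n p q : ℕ} (X : Matrix (Fin n) (Fin p) ℝ)
    (C D : Matrix (Fin p) (Fin q) ℝ) :
    ∑ i, ∑ k, (X * C) i k * (X * D) i k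
      = ∑ j, ∑ j', (Xᵀ * X) j j' * (∑ k, C j k * D j' k) := by
  simp_rw [Matrix.mul_apply, Matrix.transpose_apply, Finset.sum_mul_sum]
  calc ∑ i, ∑ k, ∑ j, ∑ j', (X i j * C j k) * (X i j' * D j' k)
      = ∑ i, ∑ j, ∑ k, ∑ j', (X i j * C j k) * (X i j' * D j' k) :=
        Finset.sum_congr rfl fun _ _ => Finset.sum_comm
    _ = ∑ j, ∑ i, ∑ k, ∑ j', (X i j * C j k) * (X i j' * D j' k) := Finset.sum_comm
    _ = ∑ j, ∑ i, ∑ j', ∑ k, (X i j * C j k) * (X i j' * D j' k) :=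
        Finset.sum_congr rfl fun _ _ => Finset.sum_congr rfl fun _ _ => Finset.sum_comm
    _ = ∑ j, ∑ j', ∑ i, ∑ k, (X i j * C j k) * (X i j' * D j' k) :=
        Finset.sum_congr rfl fun _ _ => Finset.sum_comm
    _ = ∑ j, ∑ j', ∑ i, ∑ k, (X i j * X i j') * (C j k * D j' k) := by
        refine Finset.sum_congr rfl fun _ _ => Finset.sum_congr rfl fun _ _ =>
          Finset.sum_congr rfl fun _ _ => Finset.sum_congr rfl fun _ _ => by ring

/-- Mutual incoherence implies the Restricted Eigenvalue Property. -/
theorem restricted_eigenvalue_property {n p q : ℕ} (hn : 0 < n)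
    (X : Matrix (Fin n) (Fin p) ℝ) (α : ℝ) (hα : 1 < α) (s : ℕ) (hs : 1 ≤ s)
    (hinc : MutualIncoherence ((1 / (n : ℝ)) • (Xᵀ * X)) α s) :
    ∀ S : Set (Fin p), S.ncard ≤ s →
      ∀ Δ : Matrix (Fin p) (Fin q) ℝ, Δ ≠ 0 →
        norm21 (restrict Δ Sᶜ) ≤ 3 * norm21 (restrict Δ S) →
        (1 / (n : ℝ)) * (frob (X * Δ)) ^ 2 ≥ (1 - 1 / α) * (frob (restrict Δ S)) ^ 2 := by
  intro S hS Δ _ hcone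
  obtain ⟨hdiag, hoff⟩ := hinc
  have hn' : (0:ℝ) < n := by exact_mod_cast hn
  have hα0 : (0:ℝ) < α := lt_trans one_pos hα
  have hs0 : (0:ℝ) < s := by exact_mod_cast hs
  set ε : ℝ := 1 / (7 * α * s) with hε
  have hε0 : 0 < ε := by positivity
  set A := restrict Δ S with hA
  set B := restrict Δ Sᶜ with hB
  set a : Fin p → ℝ := fun j => rowNorm (A j) with ha
  set b : Fin p → ℝ := fun j => rowNorm (B j) with hb
  have ha0 : ∀ j, 0 ≤ a j := fun j => rowNorm_nonneg' _
  have hb0 : ∀ j, 0 ≤ b j := fun j => rowNorm_nonneg' _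
  set u : ℝ := ∑ j, a j with hu
  set v : ℝ := ∑ j, b j with hv
  have hu0 : 0 ≤ u := Finset.sum_nonneg fun j _ => ha0 j
  set a2 : ℝ := ∑ j, (a j) ^ 2 with ha2
  have ha20 : 0 ≤ a2 := Finset.sum_nonneg fun j _ => sq_nonneg _
  have huv : v ≤ 3 * u := hcone
  -- Δ = A + B
  have hsplit : Δ = A + B := by
    funext j k
    by_cases hj : j ∈ S <;> simp [hA, hB, restrict, hj]
  -- the quadratic form
  set T : Matrix (Fin p) (Fin q) ℝ → Matrix (Fin p) (Fin q) ℝ → ℝ :=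
    fun C D => ∑ i, ∑ k, (X * C) i k * (X * D) i k with hT
  have hquad : ∀ C D, (1/(n:ℝ)) * T C D
      = ∑ j, ∑ j', ((1 / (n : ℝ)) • (Xᵀ * X)) j j' * (∑ k, C j k * D j' k) := by
    intro C D
    rw [hT]
    simp only []
    rw [expand_quad, Finset.mul_sum]
    refine Finset.sum_congr rfl fun j _ => ?_
    rw [Finset.mul_sum]
    refine Finset.sum_congr rfl fun j' _ => ?_
    simp [Matrix.smul_apply, smul_eq_mul, mul_assoc]
  set Ψ := (1 / (n : ℝ)) • (Xᵀ * X) with hΨ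
  -- frobenius and splitting
  have hfrob : frob (X * Δ) ^ 2 = T Δ Δ := by
    rw [frob, Real.sq_sqrt (by positivity)]
    simp [hT, sq]
  have hTsplit : T Δ Δ = T A A + 2 * T A B + T B B := by
    simp only [hT, hsplit, Matrix.mul_add, Matrix.add_apply]
    rw [Finset.mul_sum]
    rw [← Finset.sum_add_distrib, ← Finset.sum_add_distrib]
    refine Finset.sum_congr rfl fun i _ => ?_
    rw [Finset.mul_sum, ← Finset.sum_add_distrib, ← Finset.sum_add_distrib]
    refine Finset.sum_congr rfl fun k _ => by ring
  have hTBB : 0 ≤ T B B :=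
    Finset.sum_nonneg fun i _ => Finset.sum_nonneg fun k _ => mul_self_nonneg _
  -- row facts
  have hArow : ∀ j, (a j) ^ 2 = ∑ k, A j k * A j k := by
    intro j; rw [ha]; simp only []; rw [rowNorm_sq']
    simp_rw [pow_two]
  have hAzero : ∀ j, j ∉ S → ∀ k, A j k = 0 := by
    intro j hj k; simp [hA, restrict, hj]
  have hBzero : ∀ j, j ∈ S → ∀ k, B j k = 0 := by
    intro j hj k; simp [hB, restrict, hj]
  -- bound on T A A
  have hQAA : a2 - ε * u ^ 2 ≤ (1/(n:ℝ)) * T A A := by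
    rw [hquad A A]
    have step : ∀ j : Fin p, (a j) ^ 2 - ε * (a j * u) ≤ ∑ j', Ψ j j' * (∑ k, A j k * A j' k) := by
      intro j
      rw [← Finset.add_sum_erase _ _ (Finset.mem_univ j)]
      have hdiagj : Ψ j j * (∑ k, A j k * A j k) = (a j) ^ 2 := by
        rw [hdiag j, one_mul, hArow j]
      rw [hdiagj]
      have hoffb : ∀ j' ∈ Finset.univ.erase j,
          -(ε * (a j * a j')) ≤ Ψ j j' * (∑ k, A j k * A j' k) := by
        intro j' hj'
        have hne : j ≠ j' := fun h => (Finset.mem_erase.mp hj').1 h.symm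
        have h1 : |Ψ j j' * (∑ k, A j k * A j' k)| ≤ ε * (a j * a j') := by
          rw [abs_mul]
          exact mul_le_mul (hoff j j' hne) (abs_dot_le' _ _) (abs_nonneg _)
            (le_of_lt hε0)
        linarith [neg_abs_le (Ψ j j' * (∑ k, A j k * A j' k)), h1]
      have h2 : ∑ j' ∈ Finset.univ.erase j, -(ε * (a j * a j'))
          ≤ ∑ j' ∈ Finset.univ.erase j, Ψ j j' * (∑ k, A j k * A j' k) :=
        Finset.sum_le_sum hoffb
      have h3 : -(ε * (a j * u)) ≤ ∑ j' ∈ Finset.univ.erase j, -(ε * (a j * a j')) := by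
        rw [Finset.sum_neg_distrib, neg_le_neg_iff]
        have hsub : ∑ j' ∈ Finset.univ.erase j, a j' ≤ u := by
          rw [hu]
          exact Finset.sum_le_sum_of_subset_of_nonneg (Finset.subset_univ _)
            fun j' _ _ => ha0 j'
        calc ∑ j' ∈ Finset.univ.erase j, ε * (a j * a j')
            = (ε * a j) * ∑ j' ∈ Finset.univ.erase j, a j' := by
              rw [Finset.mul_sum]
              exact Finset.sum_congr rfl fun j' _ => by ring
          _ ≤ (ε * a j) * u := by
              refine mul_le_mul_of_nonneg_left hsub ?_
              exact mul_nonneg (le_of_lt hε0) (ha0 j)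
          _ = ε * (a j * u) := by ring
      linarith
    calc a2 - ε * u ^ 2 = ∑ j, ((a j)^2 - ε * (a j * u)) := by
          rw [Finset.sum_sub_distrib, ha2]
          congr 1
          rw [← Finset.mul_sum, ← Finset.sum_mul, hu]; ring
      _ ≤ _ := Finset.sum_le_sum fun j _ => step j
  -- bound on T A B
  have hQAB : -(ε * (u * v)) ≤ (1/(n:ℝ)) * T A B := by
    rw [hquad A B]
    have step : ∀ j : Fin p, ∀ j' : Fin p,
        -(ε * (a j * b j')) ≤ Ψ j j' * (∑ k, A j k * B j' k) := by
      intro j j'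
      by_cases hjj : j = j'
      · subst hjj
        by_cases hjS : j ∈ S
        · have : (∑ k, A j k * B j k) = 0 := by
            refine Finset.sum_eq_zero fun k _ => by rw [hBzero j hjS k, mul_zero]
          rw [this, mul_zero]
          have : 0 ≤ ε * (a j * b j) := mul_nonneg hε0.le (mul_nonneg (ha0 j) (hb0 j))
          linarith
        · have : (∑ k, A j k * B j k) = 0 := by
            refine Finset.sum_eq_zero fun k _ => by rw [hAzero j hjS k, zero_mul]
          rw [this, mul_zero]
          have : 0 ≤ ε * (a j * b j) := mul_nonneg hε0.le (mul_nonneg (ha0 j) (hb0 j))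
          linarith
      · have h1 : |Ψ j j' * (∑ k, A j k * B j' k)| ≤ ε * (a j * b j') := by
          rw [abs_mul]
          exact mul_le_mul (hoff j j' hjj) (abs_dot_le' _ _) (abs_nonneg _) (le_of_lt hε0)
        linarith [neg_abs_le (Ψ j j' * (∑ k, A j k * B j' k)), h1]
    have hsum : ∑ j, ∑ j', ε * (a j * b j') = ε * (u * v) := by
      rw [hu, hv, Finset.sum_mul_sum, Finset.mul_sum]
      refine Finset.sum_congr rfl fun j _ => ?_
      rw [Finset.mul_sum]
    calc -(ε * (u * v)) = -(∑ j, ∑ j', ε * (a j * b j')) := by rw [hsum]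
      _ = ∑ j, ∑ j', -(ε * (a j * b j')) := by simp_rw [Finset.sum_neg_distrib]
      _ ≤ _ := Finset.sum_le_sum fun j _ => Finset.sum_le_sum fun j' _ => step j j'
  -- u^2 ≤ s * a2
  have hcard : u ^ 2 ≤ (s:ℝ) * a2 := by
    have hfin : S.Finite := Set.toFinite S
    have hTsub : hfin.toFinset ⊆ Finset.univ := Finset.subset_univ _
    have huT : u = ∑ j ∈ hfin.toFinset, a j := by
      rw [hu]
      refine (Finset.sum_subset hTsub ?_).symm
      intro j _ hj
      have hjS : j ∉ S := by rwa [Set.Finite.mem_toFinset] at hj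
      rw [ha]; simp only []
      have : A j = fun _ => 0 := funext (hAzero j hjS)
      rw [this, rowNorm]; simp
    have hcardle : (hfin.toFinset.card : ℝ) ≤ (s : ℝ) := by
      have := hS
      rw [Set.ncard_eq_toFinset_card _ hfin] at this
      exact_mod_cast this
    calc u ^ 2 = (∑ j ∈ hfin.toFinset, a j) ^ 2 := by rw [huT]
      _ ≤ (hfin.toFinset.card : ℝ) * ∑ j ∈ hfin.toFinset, (a j) ^ 2 :=
          sq_sum_le_card_mul_sum_sq
      _ ≤ (s : ℝ) * ∑ j ∈ hfin.toFinset, (a j) ^ 2 := by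
          refine mul_le_mul_of_nonneg_right hcardle ?_
          exact Finset.sum_nonneg fun j _ => sq_nonneg _
      _ ≤ (s : ℝ) * a2 := by
          refine mul_le_mul_of_nonneg_left ?_ (le_of_lt hs0)
          rw [ha2]
          exact Finset.sum_le_sum_of_subset_of_nonneg hTsub fun j _ _ => sq_nonneg _
  -- frob of restrict
  have hfrobA : frob (restrict Δ S) ^ 2 = a2 := by
    rw [frob, Real.sq_sqrt (by positivity)]
    rw [ha2]
    refine Finset.sum_congr rfl fun j _ => ?_
    rw [ha]; simp only []
    rw [rowNorm_sq', hA]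
  -- final arithmetic
  have hεs : 7 * ε * (s:ℝ) = 1 / α := by
    rw [hε]; field_simp
  have key : (1 - 1/α) * a2 ≤ (1/(n:ℝ)) * T Δ Δ := by
    have h1 : (1/(n:ℝ)) * T Δ Δ = (1/(n:ℝ)) * T A A + 2 * ((1/(n:ℝ)) * T A B)
        + (1/(n:ℝ)) * T B B := by rw [hTsplit]; ring
    have h2 : 0 ≤ (1/(n:ℝ)) * T B B := by positivity
    have h3 : -(ε * (u * v)) ≥ -(3 * ε * u ^ 2) := by
      have h31 : ε * (u * v) ≤ ε * (u * (3 * u)) := by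
        refine mul_le_mul_of_nonneg_left ?_ (le_of_lt hε0)
        exact mul_le_mul_of_nonneg_left huv hu0
      have h32 : ε * (u * (3 * u)) = 3 * ε * u ^ 2 := by ring
      linarith
    have h4 : a2 - 7 * ε * u ^ 2 ≤ (1/(n:ℝ)) * T Δ Δ := by
      rw [h1]; linarith [hQAA, hQAB, h2, h3]
    have h5 : 7 * ε * u ^ 2 ≤ 7 * ε * ((s:ℝ) * a2) := by
      refine mul_le_mul_of_nonneg_left hcard ?_; positivity
    have h6 : 7 * ε * ((s:ℝ) * a2) = (1/α) * a2 := by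
      rw [← mul_assoc, hεs]
    have h7 : (1 - 1/α) * a2 = a2 - (1/α) * a2 := by ring
    linarith
  rw [ge_iff_le, hfrobA, hfrob]
  exact key
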